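/- Let (X, μ) be a measure space, let a, b, v : X → ℝ be functions in L²(μ) with a(x) ≤ b(x) for μ-almost every x, and let β > 0. Then β ∫_X (min(v−a, 0) + max(v−b, 0)) · v dμ ≥ β ‖v‖²_{L²(μ)} − β ‖max(|a|, |b|)‖_{L²(μ)} · ‖v‖_{L²(μ)}. -/

import Mathlib

open MeasureTheory

lemma my_int_mul {X : Type*} [MeasurableSpace X] {μ : Measure X} {f g : X → ℝ}
    (hf : MemLp f 2 μ) (hg : MemLp g 2 μ) :
    Integrable (fun x => f x * g x) μ := by
  refine Integrable.mono' ((hf.integrable_sq.add hg.integrable_sq).const_mul (1/2))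
    (hf.1.mul hg.1) ?_
  filter_upwards with x
  simp only [Pi.add_apply, Real.norm_eq_abs, abs_mul]
  nlinarith [sq_nonneg (|f x| - |g x|), sq_abs (f x), sq_abs (g x)]

lemma my_pointwise {a b v : ℝ} (hab : a ≤ b) :
    v ^ 2 - max |a| |b| * |v| ≤ (min (v - a) 0 + max (v - b) 0) * v := by
  have hMa : |a| ≤ max |a| |b| := le_max_left _ _
  have hMb : |b| ≤ max |a| |b| := le_max_right _ _
  have hvab : v * a ≤ |a| * |v| := by
    calc v * a ≤ |v * a| := le_abs_self _
    _ = |a| * |v| := by rw [abs_mul, mul_comm]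
  have hvbb : v * b ≤ |b| * |v| := by
    calc v * b ≤ |v * b| := le_abs_self _
    _ = |b| * |v| := by rw [abs_mul, mul_comm]
  have hvnn : (0:ℝ) ≤ |v| := abs_nonneg v
  rcases le_total v a with h1 | h1
  · have hmin : min (v - a) 0 = v - a := min_eq_left (by linarith)
    have hmax : max (v - b) 0 = 0 := max_eq_right (by linarith)
    rw [hmin, hmax]
    nlinarith
  · rcases le_total v b with h2 | h2
    · have hmin : min (v - a) 0 = 0 := min_eq_right (by linarith)
      have hmax : max (v - b) 0 = 0 := max_eq_right (by linarith)
      rw [hmin, hmax]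
      have hvM : |v| ≤ max |a| |b| := abs_le_max_abs_abs h1 h2
      nlinarith [sq_abs v]
    · have hmin : min (v - a) 0 = 0 := min_eq_right (by linarith)
      have hmax : max (v - b) 0 = v - b := max_eq_left (by linarith)
      rw [hmin, hmax]
      nlinarith

/-- Coercivity of the penalty term: if `a, b, v ∈ L²(μ)` with `a ≤ b` a.e. and `β > 0`, then
`β ∫ (min(v−a,0) + max(v−b,0))·v dμ ≥ β‖v‖²_{L²} − β‖max(|a|,|b|)‖_{L²}·‖v‖_{L²}`. -/
theorem penalty_term_coercive {X : Type*} [MeasurableSpace X] (μ : Measure X)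
    (a b v : X → ℝ) (ha : MemLp a 2 μ) (hb : MemLp b 2 μ) (hv : MemLp v 2 μ)
    (hab : ∀ᵐ x ∂μ, a x ≤ b x) (β : ℝ) (hβ : 0 < β) :
    β * ∫ x, (min (v x - a x) 0 + max (v x - b x) 0) * v x ∂μ ≥
      β * ∫ x, (v x) ^ 2 ∂μ -
        β * Real.sqrt (∫ x, (max |a x| |b x|) ^ 2 ∂μ) *
          Real.sqrt (∫ x, (v x) ^ 2 ∂μ) := by
  set M : X → ℝ := fun x => max |a x| |b x| with hM_def
  -- MemLp facts
  have hM : MemLp M 2 μ := ha.abs.sup hb.abs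
  have hva : MemLp (fun x => v x - a x) 2 μ := hv.sub ha
  have hvb : MemLp (fun x => v x - b x) 2 μ := hv.sub hb
  have hmin : MemLp (fun x => min (v x - a x) 0) 2 μ := hva.inf MemLp.zero'
  have hmax : MemLp (fun x => max (v x - b x) 0) 2 μ := hvb.sup MemLp.zero'
  have hm : MemLp (fun x => min (v x - a x) 0 + max (v x - b x) 0) 2 μ := hmin.add hmax
  -- integrability
  have hmv : Integrable (fun x => (min (v x - a x) 0 + max (v x - b x) 0) * v x) μ :=
    my_int_mul hm hv
  have hMv : Integrable (fun x => M x * |v x|) μ := my_int_mul hM hv.abs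
  have hv2 : Integrable (fun x => (v x) ^ 2) μ := hv.integrable_sq
  -- step 1: pointwise estimate integrated
  have step1 : ∫ x, (v x) ^ 2 ∂μ - ∫ x, M x * |v x| ∂μ ≤
      ∫ x, (min (v x - a x) 0 + max (v x - b x) 0) * v x ∂μ := by
    rw [← integral_sub hv2 hMv]
    refine integral_mono_ae (hv2.sub hMv) hmv ?_
    filter_upwards [hab] with x hx
    exact my_pointwise hx
  -- step 2: Cauchy-Schwarz
  have hpq : Real.HolderConjugate 2 2 := Real.HolderConjugate.two_two
  have hM2 : MemLp M (ENNReal.ofReal 2) μ := by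
    convert hM using 2
    simp [ENNReal.ofReal_ofNat]
  have hv2' : MemLp (fun x => |v x|) (ENNReal.ofReal 2) μ := by
    convert hv.abs using 2
    all_goals simp [ENNReal.ofReal_ofNat]
  have step2 : ∫ x, M x * |v x| ∂μ ≤
      Real.sqrt (∫ x, (M x) ^ 2 ∂μ) * Real.sqrt (∫ x, (v x) ^ 2 ∂μ) := by
    have := integral_mul_le_Lp_mul_Lq_of_nonneg hpq
      (f := M) (g := fun x => |v x|)
      (Filter.Eventually.of_forall fun x => le_max_of_le_left (abs_nonneg _))
      (Filter.Eventually.of_forall fun x => abs_nonneg _) hM2 hv2'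
    simp only [Real.rpow_two, sq_abs, ← Real.sqrt_eq_rpow] at this
    exact this
  have key : ∫ x, (v x) ^ 2 ∂μ -
      Real.sqrt (∫ x, (M x) ^ 2 ∂μ) * Real.sqrt (∫ x, (v x) ^ 2 ∂μ) ≤
      ∫ x, (min (v x - a x) 0 + max (v x - b x) 0) * v x ∂μ := by linarith
  have := mul_le_mul_of_nonneg_left key hβ.le
  rw [ge_iff_le]
  nlinarith [this]
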